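/- For every real x < 0 with p(x) ≤ 0, every λ ∈ ℂ satisfying (x−1)^k λ² − Tr T(x) λ + (x−1)^k = 0 has |λ| = 1; that is, on the bands {x < 0 : p(x) ≤ 0} both eigenvalues of Φ(x) lie on the unit circle. -/

import Mathlib

open Polynomial Matrix

/-- The matrix `A_m(z)` with rows `(z + α β⁻¹, α + β)` and `(z(α⁻¹+β⁻¹), z + β α⁻¹)`. -/
noncomputable def aztecA (a b : ℝ) (z : ℂ) : Matrix (Fin 2) (Fin 2) ℂ :=
  !![z + (a : ℂ) * ((b : ℂ))⁻¹, (a : ℂ) + (b : ℂ);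
     z * (((a : ℂ))⁻¹ + ((b : ℂ))⁻¹), z + (b : ℂ) * ((a : ℂ))⁻¹]

/-- `T(z) = A_1(z) A_2(z) ⋯ A_k(z)`. -/
noncomputable def aztecT {k : ℕ} (α β : Fin k → ℝ) (z : ℂ) : Matrix (Fin 2) (Fin 2) ℂ :=
  (List.ofFn fun m => aztecA (α m) (β m) z).prod
lemma aztecA_conj (a b x : ℝ) :
    (starRingEnd ℂ).mapMatrix (aztecA a b (x : ℂ)) = aztecA a b (x : ℂ) := by
  ext i j
  fin_cases i <;> fin_cases j <;>
    simp [aztecA, RingHom.mapMatrix_apply, Matrix.map_apply, map_add, _root_.map_mul, map_inv₀,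
      Complex.conj_ofReal]

lemma aztecT_conj {k : ℕ} (α β : Fin k → ℝ) (x : ℝ) :
    (starRingEnd ℂ).mapMatrix (aztecT α β (x : ℂ)) = aztecT α β (x : ℂ) := by
  unfold aztecT
  rw [map_list_prod, List.map_ofFn]
  have h : (⇑(starRingEnd ℂ).mapMatrix ∘ fun m => aztecA (α m) (β m) (x : ℂ))
      = fun m => aztecA (α m) (β m) (x : ℂ) := funext fun m => aztecA_conj (α m) (β m) x
  rw [h]

lemma trace_conj {k : ℕ} (α β : Fin k → ℝ) (x : ℝ) :
    (starRingEnd ℂ) (Matrix.trace (aztecT α β (x : ℂ))) = Matrix.trace (aztecT α β (x : ℂ)) := by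
  conv_rhs => rw [← aztecT_conj α β x]
  simp [Matrix.trace, Matrix.diag, RingHom.mapMatrix_apply, Matrix.map_apply, map_sum]

/-- on the bands `{x < 0 : p(x) ≤ 0}` both eigenvalues of `Φ(x)` lie on the
unit circle. -/
theorem stmt5 (k : ℕ) (hk : 1 ≤ k) (α β : Fin k → ℝ)
    (hα : ∀ m, 0 < α m) (hβ : ∀ m, 0 < β m)
    (hprod : ∏ m, α m = ∏ m, β m)
    (p : Polynomial ℝ)
    (hp : ∀ z : ℂ, Polynomial.aeval z p
        = (Matrix.trace (aztecT α β z)) ^ 2 - 4 * (z - 1) ^ (2 * k))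
    (x : ℝ) (hx : x < 0) (hpx : p.eval x ≤ 0) :
    ∀ lam : ℂ,
      ((x : ℂ) - 1) ^ k * lam ^ 2 - Matrix.trace (aztecT α β (x : ℂ)) * lam
          + ((x : ℂ) - 1) ^ k = 0 →
      ‖lam‖ = 1 := by
  intro lam hl
  set t : ℂ := Matrix.trace (aztecT α β (x : ℂ)) with ht_def
  have ht : (starRingEnd ℂ) t = t := trace_conj α β x
  -- t is real
  have htre : ((t.re : ℝ) : ℂ) = t := Complex.conj_eq_iff_re.mp ht
  set tr : ℝ := t.re with htr_def
  set c : ℝ := (x - 1) ^ k with hc_def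
  have hcC : ((c : ℝ) : ℂ) = ((x : ℂ) - 1) ^ k := by
    rw [hc_def, Complex.ofReal_pow]; push_cast; ring
  have hc_ne : c ≠ 0 := by
    apply pow_ne_zero; intro h; nlinarith
  have hc2 : 0 < c ^ 2 := by positivity
  -- p.eval x = tr^2 - 4 c^2
  have haev : ((p.eval x : ℝ) : ℂ) = t ^ 2 - 4 * ((x : ℂ) - 1) ^ (2 * k) := by
    rw [← hp (x : ℂ)]
    rw [show ((x : ℝ) : ℂ) = algebraMap ℝ ℂ x from rfl, Polynomial.aeval_algebraMap_apply]
    simp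
  have hpow : ((x : ℂ) - 1) ^ (2 * k) = ((c ^ 2 : ℝ) : ℂ) := by
    rw [mul_comm 2 k, pow_mul, ← hcC, ← Complex.ofReal_pow]
  have hreal : p.eval x = tr ^ 2 - 4 * c ^ 2 := by
    have : ((p.eval x : ℝ) : ℂ) = ((tr ^ 2 - 4 * c ^ 2 : ℝ) : ℂ) := by
      rw [haev, hpow, ← htre]; push_cast; ring
    exact_mod_cast this
  have hineq : tr ^ 2 ≤ 4 * c ^ 2 := by linarith [hreal ▸ hpx]
  -- rewrite the quadratic
  have hl' : (c : ℂ) * lam ^ 2 - (tr : ℂ) * lam + (c : ℂ) = 0 := by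
    rw [hcC, htre]; exact hl
  have hlc : (c : ℂ) * (starRingEnd ℂ lam) ^ 2 - (tr : ℂ) * (starRingEnd ℂ lam) + (c : ℂ) = 0 := by
    have := congrArg (starRingEnd ℂ) hl'
    simpa [map_sub, map_add, _root_.map_mul, map_pow, Complex.conj_ofReal] using this
  have key : (lam - starRingEnd ℂ lam) * ((c : ℂ) * (lam + starRingEnd ℂ lam) - (tr : ℂ)) = 0 := by
    linear_combination hl' - hlc
  rcases mul_eq_zero.mp key with h1 | h2
  · -- lam is real
    have hre : ((lam.re : ℝ) : ℂ) = lam := by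
      have : starRingEnd ℂ lam = lam := by linear_combination -h1
      exact Complex.conj_eq_iff_re.mp this
    set r : ℝ := lam.re with hrdef
    have hr : c * r ^ 2 - tr * r + c = 0 := by
      have : ((c * r ^ 2 - tr * r + c : ℝ) : ℂ) = 0 := by
        push_cast; rw [hre]; exact hl'
      exact_mod_cast this
    have h5 : c * (r ^ 2 + 1) = tr * r := by linarith [hr]
    have h6 : (c * (r ^ 2 + 1)) ^ 2 = (tr * r) ^ 2 := by rw [h5]
    have h7 : tr ^ 2 * r ^ 2 ≤ 4 * c ^ 2 * r ^ 2 := by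
      nlinarith [mul_le_mul_of_nonneg_right hineq (sq_nonneg r)]
    have hsq : c ^ 2 * (r ^ 2 - 1) ^ 2 ≤ 0 := by nlinarith [h6, h7]
    have h8 : (r ^ 2 - 1) ^ 2 ≤ 0 := by nlinarith [hsq, hc2]
    have h9 : (r ^ 2 - 1) ^ 2 = 0 := le_antisymm h8 (sq_nonneg _)
    have hr2 : r ^ 2 = 1 := by
      have := pow_eq_zero_iff (two_ne_zero) |>.mp h9
      linarith
    rw [← hre, Complex.norm_real]
    have : (r - 1) * (r + 1) = 0 := by nlinarith
    rcases mul_eq_zero.mp this with h | h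
    · rw [show r = 1 by linarith]; simp
    · rw [show r = -1 by linarith]; simp
  · -- lam * conj lam = 1
    have hml : (c : ℂ) * (1 - lam * starRingEnd ℂ lam) = 0 := by
      linear_combination hl' - lam * h2
    have hcC' : (c : ℂ) ≠ 0 := by exact_mod_cast hc_ne
    have h3 : lam * starRingEnd ℂ lam = 1 := by
      have := (mul_eq_zero.mp hml).resolve_left hcC'
      linear_combination -this
    have h4 : (Complex.normSq lam : ℂ) = 1 := by rw [← Complex.mul_conj]; exact h3
    have h5 : Complex.normSq lam = 1 := by exact_mod_cast h4
    rw [Complex.norm_def, h5, Real.sqrt_one]
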